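/- Let P be a bounded idempotent (P² = P) on a Hilbert space. Then P commutes with (P* − P)², the operator 1 − (P* − P)² is positive and invertible, and Q = P(1 − (P*−P)²)^{-1} P* = P(P*P)^{-1}P* is the orthogonal projection onto the range of P. -/

import Mathlib

open ContinuousLinearMap

section AuxRingLemmas

variable {R : Type*} [Ring R] (p s : R) (hp : p * p = p) (hs : s * s = s)
include hp hs

private lemma aux_comm' : p * (s - p) ^ 2 = (s - p) ^ 2 * p := by
  noncomm_ring
  simp [hp, hs, mul_assoc, ← mul_assoc, sub_mul, mul_sub]

private lemma aux_tps' : (1 - (s - p) ^ 2) * (p * s) = (p * s) * (p * s) := by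
  noncomm_ring
  simp [hp, hs, mul_assoc, ← mul_assoc, sub_mul, mul_sub]
  abel

private lemma aux_tp' : (1 - (s - p) ^ 2) * p = p * (s * p) := by
  noncomm_ring
  simp [hp, hs, mul_assoc, ← mul_assoc, sub_mul, mul_sub]
  abel

end AuxRingLemmas

/-- For a bounded idempotent `P` on a Hilbert space: `P` commutes with
`(P* − P)²`, the operator `1 − (P* − P)²` is positive and invertible, and
`Q = P (1 − (P*−P)²)⁻¹ P*` is the orthogonal projection onto the range of `P`,
i.e. `Q` is a selfadjoint idempotent with `Ran Q = Ran P`. -/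
theorem idempotent_range_projection {H : Type*} [NormedAddCommGroup H]
    [InnerProductSpace ℂ H] [CompleteSpace H]
    (P : H →L[ℂ] H) (hP : P * P = P) :
    P * (adjoint P - P) ^ 2 = (adjoint P - P) ^ 2 * P ∧
    ((1 : H →L[ℂ] H) - (adjoint P - P) ^ 2).IsPositive ∧
    IsUnit ((1 : H →L[ℂ] H) - (adjoint P - P) ^ 2) ∧
    (IsSelfAdjoint (P * Ring.inverse (1 - (adjoint P - P) ^ 2) * adjoint P) ∧
      (P * Ring.inverse (1 - (adjoint P - P) ^ 2) * adjoint P) *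
        (P * Ring.inverse (1 - (adjoint P - P) ^ 2) * adjoint P) =
        P * Ring.inverse (1 - (adjoint P - P) ^ 2) * adjoint P ∧
      LinearMap.range ((P * Ring.inverse (1 - (adjoint P - P) ^ 2) * adjoint P : H →L[ℂ] H) : H →ₗ[ℂ] H) =
        LinearMap.range (P : H →ₗ[ℂ] H)) := by
  set s : H →L[ℂ] H := adjoint P with hs_def
  have hs : s * s = s := by
    rw [hs_def, ← star_eq_adjoint, ← star_mul, hP]
  -- abbreviations
  set A : H →L[ℂ] H := s - P with hA_def
  set T : H →L[ℂ] H := 1 - A ^ 2 with hT_def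
  -- the commutation relation
  have part1 : P * A ^ 2 = A ^ 2 * P := aux_comm' P s hP hs
  -- star of A
  have hstarA : star A = -A := by
    rw [hA_def, star_sub, hs_def, ← star_eq_adjoint, star_star, star_eq_adjoint, neg_sub]
  -- T as 1 + star A * A
  have hTA : T = 1 + star A * A := by
    rw [hstarA, hT_def]; noncomm_ring
  -- positivity
  have part2 : T.IsPositive := by
    rw [hTA, star_eq_adjoint]
    have h2 := isPositive_one.adjoint_conj A
    have h3 : (adjoint A) ∘L ((1 : H →L[ℂ] H) ∘L A) = adjoint A * A := by ext x; rfl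
    rw [h3] at h2
    exact isPositive_one.add h2
  -- invertibility
  have part3 : IsUnit T := by
    rw [hTA]
    have h := spectrum_star_mul_self_nonneg (b := A)
    have h1 : (-1 : ℝ) ∉ spectrum ℝ (star A * A) := fun hm => by linarith [h _ hm]
    rw [spectrum.notMem_iff] at h1
    rw [map_neg, map_one] at h1
    simpa [neg_sub, add_comm] using h1.neg
  -- self-adjointness of T
  have hTsa : IsSelfAdjoint T := part2.isSelfAdjoint
  -- inverse
  set I : H →L[ℂ] H := Ring.inverse T with hI_def
  have hIT : I * T = 1 := Ring.inverse_mul_cancel _ part3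
  have hTI : T * I = 1 := Ring.mul_inverse_cancel _ part3
  -- I is selfadjoint
  have hIsa : IsSelfAdjoint I := by
    rw [hI_def, IsSelfAdjoint, ← Ring.inverse_star, hTsa.star_eq]
  -- T commutes with P
  have hTP : T * P = P * T := by
    rw [hT_def, sub_mul, mul_sub, one_mul, mul_one, part1]
  -- T commutes with s
  have hDsym : (P - s) ^ 2 = A ^ 2 := by
    rw [hA_def, ← neg_sub s P, neg_sq]
  have part1s : s * A ^ 2 = A ^ 2 * s := by
    rw [← hDsym]; exact aux_comm' s P hs hP
  have hTS : T * s = s * T := by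
    rw [hT_def, sub_mul, mul_sub, one_mul, mul_one, part1s]
  -- I commutes with P and s
  have hIP : P * I = I * P := by
    have h0 : I * (T * P) * I = I * (P * T) * I := by rw [hTP]
    calc P * I = I * T * P * I := by rw [hIT, one_mul]
    _ = I * (P * T) * I := by rw [mul_assoc I T P, hTP]
    _ = I * P * (T * I) := by rw [mul_assoc, mul_assoc, mul_assoc]
    _ = I * P := by rw [hTI, mul_one]
  have hIS : s * I = I * s := by
    have h0 : I * (T * s) * I = I * (s * T) * I := by rw [hTS]
    calc s * I = I * T * s * I := by rw [hIT, one_mul]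
    _ = I * (s * T) * I := by rw [mul_assoc I T s, hTS]
    _ = I * s * (T * I) := by rw [mul_assoc, mul_assoc, mul_assoc]
    _ = I * s := by rw [hTI, mul_one]
  -- Q
  set Q : H →L[ℂ] H := P * I * s with hQ_def
  have hQI : Q = I * (P * s) := by
    rw [hQ_def, hIP, mul_assoc]
  -- selfadjointness of Q
  have part4a : IsSelfAdjoint Q := by
    rw [hQ_def, IsSelfAdjoint, star_mul, star_mul, hIsa.star_eq, hs_def, ← star_eq_adjoint,
      star_star, star_eq_adjoint, ← hs_def, ← mul_assoc]
  -- idempotency of Q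
  have hTps : T * (P * s) = (P * s) * (P * s) := aux_tps' P s hP hs
  have part4b : Q * Q = Q := by
    have hPsI : (P * s) * I = I * (P * s) := by
      rw [mul_assoc, hIS, ← mul_assoc, hIP, mul_assoc]
    calc Q * Q = I * ((P * s) * I) * (P * s) := by
          rw [hQI, mul_assoc, ← mul_assoc (P*s) I (P*s), ← mul_assoc]
      _ = I * (I * ((P * s) * (P * s))) := by rw [hPsI, mul_assoc, mul_assoc]
      _ = I * (I * T * (P * s)) := by rw [← hTps, mul_assoc]
      _ = Q := by rw [hIT, one_mul, hQI]
  -- Q * P = P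
  have hTp : T * P = P * (s * P) := aux_tp' P s hP hs
  have hQP : Q * P = P := by
    calc Q * P = I * (P * (s * P)) := by rw [hQI, mul_assoc, mul_assoc]
      _ = I * (T * P) := by rw [hTp]
      _ = P := by rw [← mul_assoc, hIT, one_mul]
  -- range equality
  have part4c : LinearMap.range (Q : H →ₗ[ℂ] H) = LinearMap.range (P : H →ₗ[ℂ] H) := by
    apply le_antisymm
    · rintro x ⟨y, rfl⟩
      exact ⟨(I * s) y, by simp only [ContinuousLinearMap.coe_coe]; rw [← ContinuousLinearMap.mul_apply, ← mul_assoc, ← hQ_def]⟩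
    · rintro x ⟨y, rfl⟩
      exact ⟨P y, by simp only [ContinuousLinearMap.coe_coe]; rw [← ContinuousLinearMap.mul_apply, hQP]⟩
  exact ⟨part1, part2, part3, part4a, part4b, part4c⟩
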